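/- Let 1 ∈ A ⊂ B be an inclusion of unital C*-algebras of index-finite type, and let {(v_i, v_i*)}_{i=1}^m be a quasi-basis for a faithful conditional expectation E : B → A. Then tsr(A) ≤ m²(tsr(B) + 1) − 2m + 1. -/

import Mathlib

/-- `Lg R n` is the set of n-tuples generating `R` as a left ideal. -/
def Lg (R : Type*) [Ring R] (n : ℕ) : Set (Fin n → R) :=
  {b | ∃ c : Fin n → R, ∑ i, c i * b i = 1}

/-- Topological stable rank. -/
noncomputable def tsr (R : Type*) [Ring R] [TopologicalSpace R] : ℕ∞ :=
  sInf {N : ℕ∞ | ∃ n : ℕ, (n : ℕ∞) = N ∧ Dense (Lg R n)}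

/-- `E : B → B` is a conditional expectation onto the unital C*-subalgebra `A` of `B`:
it is an `A`-bimodule projection onto `A`, star-preserving and positive. -/
def IsCondExp {B : Type*} [CStarAlgebra B] (A : StarSubalgebra ℂ B) (E : B →ₗ[ℂ] B) : Prop :=
  (∀ b : B, E b ∈ A) ∧ (∀ a ∈ A, E a = a) ∧
  (∀ a ∈ A, ∀ b : B, ∀ c ∈ A, E (a * b * c) = a * E b * c) ∧
  (∀ b : B, E (star b) = star (E b)) ∧ (∀ b : B, ∃ x : B, E (star b * b) = star x * x)

/-- `E` is faithful. -/
def IsFaithful {B : Type*} [CStarAlgebra B] (E : B →ₗ[ℂ] B) : Prop :=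
  ∀ b : B, E (star b * b) = 0 → b = 0

/-- `{(vᵢ, vᵢ*)}` is a quasi-basis for `E`: every `x` satisfies
`x = ∑ vᵢ E(vᵢ* x) = ∑ E(x vᵢ) vᵢ*`.  In particular `E` is of index-finite type. -/
def IsQuasiBasis {B : Type*} [CStarAlgebra B] (E : B →ₗ[ℂ] B) {n : ℕ} (v : Fin n → B) : Prop :=
  ∀ b : B, (∑ i, v i * E (star (v i) * b)) = b ∧ (∑ i, E (b * v i) * star (v i)) = b

section Aux

variable {B : Type*} [CStarAlgebra B]

/-- A conditional expectation is bounded (with crude constant 6). -/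
lemma IsCondExp.norm_bound (A : StarSubalgebra ℂ B) (E : B →ₗ[ℂ] B)
    (hE : IsCondExp A E) (x : B) : ‖E x‖ ≤ 6 * ‖x‖ := by
  obtain ⟨hmem, hproj, hbim, hstar, hpos⟩ := hE
  rcases subsingleton_or_nontrivial B with hB | hB
  · have h1 : E x = 0 := Subsingleton.elim _ _
    have h2 : (0:ℝ) ≤ ‖x‖ := norm_nonneg x
    rw [h1, norm_zero]; positivity
  letI := CStarAlgebra.spectralOrder B
  haveI := CStarAlgebra.spectralOrderedRing B
  have hE1 : E 1 = 1 := hproj 1 (one_mem A)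
  -- E maps nonneg to nonneg
  have hEpos : ∀ y : B, 0 ≤ y → 0 ≤ E y := by
    intro y hy
    obtain ⟨z, hz⟩ := hpos (CFC.sqrt y)
    have hs : star (CFC.sqrt y) = CFC.sqrt y :=
      (IsSelfAdjoint.of_nonneg (CFC.sqrt_nonneg y))
    rw [hs, CFC.sqrt_mul_sqrt_self y hy] at hz
    rw [hz]
    exact star_mul_self_nonneg z
  have hmap : ∀ r : ℝ, E (algebraMap ℝ B r) = algebraMap ℝ B r := by
    intro r
    rw [Algebra.algebraMap_eq_smul_one, LinearMap.map_smul_of_tower, hE1]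
  have hnorm_alg : ∀ y : B, ‖algebraMap ℝ B ‖y‖‖ = ‖y‖ := by
    intro y
    rw [Algebra.algebraMap_eq_smul_one, norm_smul, norm_one,
      Real.norm_of_nonneg (norm_nonneg y), mul_one]
  -- positive contraction
  have hposC : ∀ y : B, 0 ≤ y → ‖E y‖ ≤ ‖y‖ := by
    intro y hy
    have hsa : IsSelfAdjoint y := .of_nonneg hy
    have h2 : y ≤ algebraMap ℝ B ‖y‖ := hsa.le_algebraMap_norm_self
    have h4 := hEpos _ (sub_nonneg.mpr h2)
    rw [map_sub, hmap] at h4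
    have h1 : E y ≤ algebraMap ℝ B ‖y‖ := sub_nonneg.mp h4
    calc ‖E y‖ ≤ ‖algebraMap ℝ B ‖y‖‖ :=
          CStarAlgebra.norm_le_norm_of_nonneg_of_le (hEpos y hy) h1
    _ = ‖y‖ := hnorm_alg y
  -- selfadjoint bound
  have hsaB : ∀ y : B, star y = y → ‖E y‖ ≤ 3 * ‖y‖ := by
    intro y hy
    have hsa : IsSelfAdjoint y := hy
    have hw0 : 0 ≤ algebraMap ℝ B ‖y‖ - y := sub_nonneg.mpr hsa.le_algebraMap_norm_self
    have hwn : ‖algebraMap ℝ B ‖y‖ - y‖ ≤ 2 * ‖y‖ := by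
      calc ‖algebraMap ℝ B ‖y‖ - y‖ ≤ ‖algebraMap ℝ B ‖y‖‖ + ‖y‖ := norm_sub_le _ _
      _ = 2 * ‖y‖ := by rw [hnorm_alg]; ring
    have hEy : E y = algebraMap ℝ B ‖y‖ - E (algebraMap ℝ B ‖y‖ - y) := by
      rw [map_sub, hmap]; exact (sub_sub_cancel _ _).symm
    calc ‖E y‖ ≤ ‖algebraMap ℝ B ‖y‖‖ + ‖E (algebraMap ℝ B ‖y‖ - y)‖ := by
          rw [hEy]; exact norm_sub_le _ _
    _ ≤ ‖y‖ + ‖algebraMap ℝ B ‖y‖ - y‖ := by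
          rw [hnorm_alg]
          exact add_le_add_right (hposC _ hw0) _
    _ ≤ ‖y‖ + 2 * ‖y‖ := add_le_add_right hwn _
    _ = 3 * ‖y‖ := by ring
  -- general element
  set a : B := (2⁻¹ : ℂ) • (x + star x) with ha_def
  set b : B := (-(2⁻¹) * Complex.I) • (x - star x) with hb_def
  have hxa : x = a + Complex.I • b := by
    rw [ha_def, hb_def, smul_smul]
    have h5 : Complex.I * (-(2⁻¹) * Complex.I) = (2⁻¹ : ℂ) := by
      ring_nf
      rw [Complex.I_sq]
      ring
    rw [h5]
    module
  have hsa_a : star a = a := by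
    rw [ha_def, star_smul, star_add, star_star]
    rw [show star (2⁻¹ : ℂ) = (2⁻¹ : ℂ) by simp, add_comm]
  have hsa_b : star b = b := by
    rw [hb_def, star_smul, star_sub, star_star]
    have h6 : star (-(2⁻¹) * Complex.I : ℂ) = (2⁻¹ : ℂ) * Complex.I := by
      simp [Complex.star_def, Complex.conj_I]
    rw [h6, show ((-(2⁻¹) * Complex.I : ℂ)) = -((2⁻¹ : ℂ) * Complex.I) by ring,
      neg_smul, ← smul_neg, neg_sub]
  have hna : ‖a‖ ≤ ‖x‖ := by
    rw [ha_def, norm_smul]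
    rw [show ‖(2⁻¹ : ℂ)‖ = 2⁻¹ by rw [norm_inv]; simp]
    calc 2⁻¹ * ‖x + star x‖ ≤ 2⁻¹ * (‖x‖ + ‖star x‖) := by
          apply mul_le_mul_of_nonneg_left (norm_add_le _ _); norm_num
    _ = ‖x‖ := by rw [norm_star]; ring
  have hnb : ‖b‖ ≤ ‖x‖ := by
    rw [hb_def, norm_smul]
    rw [show ‖(-(2⁻¹) * Complex.I)‖ = 2⁻¹ by simp [norm_mul]]
    calc 2⁻¹ * ‖x - star x‖ ≤ 2⁻¹ * (‖x‖ + ‖star x‖) := by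
          apply mul_le_mul_of_nonneg_left (norm_sub_le _ _); norm_num
    _ = ‖x‖ := by rw [norm_star]; ring
  calc ‖E x‖ = ‖E a + Complex.I • E b‖ := by
        conv_lhs => rw [hxa]
        rw [map_add, map_smul E Complex.I b]
  _ ≤ ‖E a‖ + ‖Complex.I • E b‖ := norm_add_le _ _
  _ = ‖E a‖ + ‖E b‖ := by rw [norm_smul, Complex.norm_I, one_mul]
  _ ≤ 3 * ‖a‖ + 3 * ‖b‖ := add_le_add (hsaB a hsa_a) (hsaB b hsa_b)
  _ ≤ 3 * ‖x‖ + 3 * ‖x‖ := by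
        apply add_le_add <;> apply mul_le_mul_of_nonneg_left (by assumption) (by norm_num)
  _ = 6 * ‖x‖ := by ring

end Aux

section Main

variable {B : Type*} [CStarAlgebra B]

lemma IsCondExp.sum_mul_mem (A : StarSubalgebra ℂ B) (E : B →ₗ[ℂ] B)
    (hE : IsCondExp A E) {m : ℕ} (v : Fin m → B) (c : B) (t : Fin m → B)
    (ht : ∀ j, t j ∈ A) :
    ∑ j, E (c * v j) * t j = E (c * ∑ j, v j * t j) := by
  rw [Finset.mul_sum, map_sum]
  apply Finset.sum_congr rfl
  intro j _
  have h := hE.2.2.1 1 (one_mem A) (c * v j) (t j) (ht j)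
  rw [one_mul, one_mul] at h
  rw [← h, mul_assoc]

/-- The key density transfer: if the `n`-tuples generating `B` are dense,
then the `m*n`-tuples generating `A` are dense. -/
lemma dense_lg_of_quasiBasis (A : StarSubalgebra ℂ B) (E : B →ₗ[ℂ] B)
    (hE : IsCondExp A E) {m n : ℕ} (v : Fin m → B) (hv : IsQuasiBasis E v)
    (hd : Dense (Lg B n)) : Dense (Lg (↥A) (m * n)) := by
  rw [Metric.dense_iff]
  intro f r hr
  -- constants
  set V : ℝ := ∑ j, ‖v j‖ with hV
  have hV0 : 0 ≤ V := Finset.sum_nonneg fun j _ => norm_nonneg _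
  set M : ℝ := 6 * V + 1 with hM
  have hM0 : 0 < M := by positivity
  -- targets
  set τ : Fin n → Fin m → ↥A := fun k j => f (finProdFinEquiv (j, k)) with hτ
  set bb : Fin n → B := fun k => ∑ j, v j * (τ k j : B) with hbb
  obtain ⟨b', hb'ball, c, hc⟩ := Metric.dense_iff.mp hd bb (r / M) (by positivity)
  rw [Metric.mem_ball] at hb'ball
  -- the approximating generating tuple
  set σ : Fin (m * n) → ↥A := fun i =>
    ⟨(f i : B) + E (star (v (finProdFinEquiv.symm i).1) *
        (b' (finProdFinEquiv.symm i).2 - bb (finProdFinEquiv.symm i).2)),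
      A.add_mem (f i).2 (hE.1 _)⟩ with hσ
  refine ⟨σ, ?_, ?_⟩
  · -- σ is within r of f
    rw [Metric.mem_ball, dist_pi_lt_iff hr]
    intro i
    set j := (finProdFinEquiv.symm i).1
    set k := (finProdFinEquiv.symm i).2
    have hdist : dist (σ i) (f i) = ‖E (star (v j) * (b' k - bb k))‖ := by
      rw [Subtype.dist_eq, dist_eq_norm, hσ]
      simp only [add_sub_cancel_left]
      rfl
    rw [hdist]
    have hdk : ‖b' k - bb k‖ < r / M := by
      calc ‖b' k - bb k‖ = dist (b' k) (bb k) := (dist_eq_norm _ _).symm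
      _ ≤ dist b' bb := dist_le_pi_dist b' bb k
      _ < r / M := hb'ball
    have hvj : ‖v j‖ ≤ V := by
      rw [hV]
      exact Finset.single_le_sum (fun i _ => norm_nonneg (v i)) (Finset.mem_univ j)
    calc ‖E (star (v j) * (b' k - bb k))‖
        ≤ 6 * ‖star (v j) * (b' k - bb k)‖ := hE.norm_bound A E _
    _ ≤ 6 * (‖v j‖ * ‖b' k - bb k‖) := by
          apply mul_le_mul_of_nonneg_left _ (by norm_num)
          rw [← norm_star (v j)]
          exact norm_mul_le _ _
    _ ≤ 6 * V * ‖b' k - bb k‖ := by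
          rw [mul_assoc]
          apply mul_le_mul_of_nonneg_left _ (by norm_num)
          exact mul_le_mul_of_nonneg_right hvj (norm_nonneg _)
    _ ≤ 6 * V * (r / M) := by
          apply mul_le_mul_of_nonneg_left hdk.le (by positivity)
    _ < M * (r / M) := by
          apply mul_lt_mul_of_pos_right _ (by positivity)
          rw [hM]; linarith
    _ = r := by field_simp
  · -- σ generates
    refine ⟨fun i => ⟨E (c (finProdFinEquiv.symm i).2 * v (finProdFinEquiv.symm i).1),
      hE.1 _⟩, ?_⟩
    apply Subtype.ext
    push_cast
    rw [← Equiv.sum_comp finProdFinEquiv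
      (fun i => (E (c (finProdFinEquiv.symm i).2 * v (finProdFinEquiv.symm i).1) : B) *
        ((f i : B) + E (star (v (finProdFinEquiv.symm i).1) *
          (b' (finProdFinEquiv.symm i).2 - bb (finProdFinEquiv.symm i).2))))]
    simp only [Equiv.symm_apply_apply]
    rw [Fintype.sum_prod_type]
    rw [Finset.sum_comm]
    have hinner : ∀ k, ∑ j, (E (c k * v j)) *
        ((f (finProdFinEquiv (j, k)) : B) + E (star (v j) * (b' k - bb k))) =
        E (c k * b' k) := by
      intro k
      have e1 : ∑ j, E (c k * v j) * (τ k j : B) = E (c k * bb k) := by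
        rw [hbb]
        exact hE.sum_mul_mem A E v (c k) (fun j => (τ k j : B)) (fun j => (τ k j).2)
      have e2 : ∑ j, E (c k * v j) * E (star (v j) * (b' k - bb k)) =
          E (c k * (b' k - bb k)) := by
        rw [show (c k * (b' k - bb k)) = c k * ∑ j, v j * E (star (v j) * (b' k - bb k)) by
          rw [(hv (b' k - bb k)).1]]
        exact hE.sum_mul_mem A E v (c k) _ (fun j => hE.1 _)
      calc ∑ j, (E (c k * v j)) *
          ((f (finProdFinEquiv (j, k)) : B) + E (star (v j) * (b' k - bb k)))
          = ∑ j, (E (c k * v j) * (τ k j : B) +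
            E (c k * v j) * E (star (v j) * (b' k - bb k))) := by
            apply Finset.sum_congr rfl
            intro j _
            rw [mul_add, hτ]
      _ = E (c k * bb k) + E (c k * (b' k - bb k)) := by
            rw [Finset.sum_add_distrib, e1, e2]
      _ = E (c k * b' k) := by
            rw [← map_add, mul_sub, add_sub_cancel]
    calc ∑ k, ∑ j, (E (c k * v j)) *
        ((f (finProdFinEquiv (j, k)) : B) + E (star (v j) * (b' k - bb k)))
        = ∑ k, E (c k * b' k) := Finset.sum_congr rfl (fun k _ => hinner k)
    _ = E (∑ k, c k * b' k) := (map_sum E _ _).symm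
    _ = E 1 := by rw [hc]
    _ = 1 := hE.2.1 1 (one_mem A)

end Main

theorem stmt_11 {B : Type*} [CStarAlgebra B] (A : StarSubalgebra ℂ B) (E : B →ₗ[ℂ] B)
    (hE : IsCondExp A E) (hf : IsFaithful E) {m : ℕ} (v : Fin m → B)
    (hv : IsQuasiBasis E v) :
    tsr A ≤ (m : ℕ∞) ^ 2 * (tsr B + 1) - 2 * (m : ℕ∞) + 1 := by
  classical
  by_cases hex : ∃ n : ℕ, Dense (Lg B n)
  · set n₀ := Nat.find hex with hn₀
    have hdense : Dense (Lg B n₀) := Nat.find_spec hex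
    have htsrB : (n₀ : ℕ∞) ≤ tsr B := by
      apply le_sInf
      rintro N ⟨n, rfl, hn⟩
      exact_mod_cast Nat.find_min' hex hn
    have hA : tsr ↥A ≤ ((m * n₀ : ℕ) : ℕ∞) :=
      sInf_le ⟨m * n₀, rfl, dense_lg_of_quasiBasis A E hE v hv hdense⟩
    refine hA.trans ?_
    have hnat : (m * n₀ : ℕ) ≤ (m ^ 2 * (n₀ + 1) - 2 * m + 1 : ℕ) := by
      have hsq : m ^ 2 * (n₀ + 1) = m*m*n₀ + m*m := by ring
      rcases Nat.lt_or_ge m 2 with hm | hm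
      · interval_cases m <;> omega
      · have h1 : m*n₀ ≤ m*m*n₀ :=
          Nat.mul_le_mul_right n₀ (Nat.le_mul_of_pos_left m (by omega))
        have h2 : 2*m ≤ m*m := Nat.mul_le_mul_right m hm
        omega
    have hcast : ((m ^ 2 * (n₀ + 1) - 2 * m + 1 : ℕ) : ℕ∞) =
        (m : ℕ∞) ^ 2 * ((n₀ : ℕ∞) + 1) - 2 * (m : ℕ∞) + 1 := by
      push_cast [← ENat.coe_sub]
      push_cast
      ring_nf
    have hmono : (m : ℕ∞) ^ 2 * ((n₀ : ℕ∞) + 1) - 2 * (m : ℕ∞) + 1 ≤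
        (m : ℕ∞) ^ 2 * (tsr B + 1) - 2 * (m : ℕ∞) + 1 := by
      apply add_le_add_left
      apply tsub_le_tsub_right
      apply mul_le_mul_right
      exact add_le_add_left htsrB 1
    calc ((m * n₀ : ℕ) : ℕ∞) ≤ ((m ^ 2 * (n₀ + 1) - 2 * m + 1 : ℕ) : ℕ∞) := by
          exact_mod_cast hnat
    _ = (m : ℕ∞) ^ 2 * ((n₀ : ℕ∞) + 1) - 2 * (m : ℕ∞) + 1 := hcast
    _ ≤ _ := hmono
  · -- tsr B = ⊤
    have hm : m ≠ 0 := by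
      rintro rfl
      apply hex
      refine ⟨0, ?_⟩
      have hB0 : ∀ b : B, b = 0 := by
        intro b
        have := (hv b).1
        simpa using this.symm
      have : Lg B 0 = Set.univ := by
        ext x
        simp only [Set.mem_univ, iff_true, Lg, Set.mem_setOf_eq]
        exact ⟨fun i => 0, by rw [Finset.univ_eq_empty, Finset.sum_empty]; exact (hB0 1).symm⟩
      rw [this]
      exact dense_univ
    have htop : tsr B = ⊤ := by
      rw [tsr]
      rw [sInf_eq_top]
      rintro N ⟨n, rfl, hn⟩
      exact absurd ⟨n, hn⟩ hex
    rw [htop]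
    have : (m : ℕ∞) ^ 2 * (⊤ + 1) - 2 * (m : ℕ∞) + 1 = ⊤ := by
      rw [top_add]
      rw [ENat.mul_top (by
        apply pow_ne_zero
        exact_mod_cast hm)]
      rw [show (2 * (m : ℕ∞)) = ((2 * m : ℕ) : ℕ∞) by push_cast; ring]
      rw [ENat.top_sub_coe, top_add]
    rw [this]
    exact le_top
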